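/- arXiv:2007.12209 — 9 statements merged into one kernel-verified Lean document; each statement's English description precedes it below -/
import Mathlib

section
/- Let R be an associative ring, C an R-module, cl a closure operation on R-submodules of C, and A ⊆ B ⊆ C submodules with A Artinian. If A is a cl-reduction of B in C (i.e., A^cl_C = B^cl_C), then there exists a minimal cl-reduction K of B in C with K ⊆ A; that is, K ⊆ A, K^cl_C = B^cl_C, and any cl-reduction E of B in C with E ⊆ K satisfies E = K. -/
/-- If `A` is an Artinian submodule that is a `cl`-reduction of `B` in `C`,
then there is a minimal `cl`-reduction `K` of `B` in `C` with `K ⊆ A`. -/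
theorem exists_minimal_reduction_of_artinian
    {R C : Type*} [Ring R] [AddCommGroup C] [Module R C]
    (cl : Submodule R C → Submodule R C)
    (hext : ∀ L, L ≤ cl L)
    (hmono : ∀ L N : Submodule R C, L ≤ N → cl L ≤ cl N)
    (hidem : ∀ L, cl (cl L) = cl L)
    (A B : Submodule R C) (hAB : A ≤ B) [IsArtinian R A]
    (hred : cl A = cl B) :
    ∃ K : Submodule R C, K ≤ A ∧ K ≤ B ∧ cl K = cl B ∧
      ∀ E : Submodule R C, E ≤ B → cl E = cl B → E ≤ K → E = K := by
  set S : Set (Submodule R A) := {p | cl (p.map A.subtype) = cl B} with hS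
  have hne : S.Nonempty := ⟨⊤, by simp [hS, Submodule.map_subtype_top, hred]⟩
  obtain ⟨p, hp, hmin⟩ := IsArtinian.set_has_minimal S hne
  refine ⟨p.map A.subtype, Submodule.map_subtype_le A p,
    (Submodule.map_subtype_le A p).trans hAB, hp, ?_⟩
  intro E hEB hEcl hEK
  have hEA : E ≤ A := hEK.trans (Submodule.map_subtype_le A p)
  set q : Submodule R A := E.comap A.subtype with hq
  have hqmap : q.map A.subtype = E := by
    rw [hq, Submodule.map_comap_eq, Submodule.range_subtype, inf_eq_right.mpr hEA]
  have hqS : q ∈ S := by rw [hS, Set.mem_setOf_eq, hqmap]; exact hEcl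
  have hqp : q ≤ p := by
    intro x hx
    have : (x : C) ∈ p.map A.subtype := hEK (by simpa [hq] using hx)
    obtain ⟨y, hy, hxy⟩ := this
    have : y = x := Subtype.ext hxy
    rwa [← this]
  have : q = p := by
    by_contra h
    exact hmin q hqS (lt_of_le_of_ne hqp h)
  rw [← hqmap, this]
end

section
/- Let (R, m) → (S, n) be a local homomorphism of Noetherian local rings and B a finitely generated S-module. Define the closure cl_B on finitely generated R-modules by: for L ⊆ M, L^{cl_B}_M = {x ∈ M : the image of x in M ⊗_R B lies in the image of L ⊗_R B → M ⊗_R B}. Then cl_B is a Nakayama closure: if L ⊆ N ⊆ M are finitely generated R-modules with N ⊆ (L + mN)^{cl_B}_M, then L^{cl_B}_M = N^{cl_B}_M. -/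
open TensorProduct IsLocalRing

/-- If `(R,m) → (S,n)` is a local homomorphism of Noetherian local rings and
`B` is a finitely generated `S`-module, then the module closure `cl_B` (where
`x ∈ L^{cl_B}_M` iff for every `b : B`, `x ⊗ b` lies in the image of `L ⊗_R B → M ⊗_R B`)
is a Nakayama closure on finitely generated `R`-modules. -/
theorem moduleClosure_isNakayama
    {R S : Type*} [CommRing R] [IsNoetherianRing R] [IsLocalRing R]
    [CommRing S] [IsNoetherianRing S] [IsLocalRing S]
    [Algebra R S] [IsLocalHom (algebraMap R S)]
    (B : Type*) [AddCommGroup B] [Module S B] [Module R B] [IsScalarTower R S B]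
    [Module.Finite S B]
    {M : Type*} [AddCommGroup M] [Module R M] [Module.Finite R M]
    (L N : Submodule R M) (hLN : L ≤ N)
    (hNak : ∀ x ∈ N, ∀ b : B,
      x ⊗ₜ[R] b ∈ LinearMap.range
        (LinearMap.rTensor B (L ⊔ maximalIdeal R • N).subtype)) :
    ∀ x : M,
      (∀ b : B, x ⊗ₜ[R] b ∈ LinearMap.range (LinearMap.rTensor B L.subtype)) ↔
      (∀ b : B, x ⊗ₜ[R] b ∈ LinearMap.range (LinearMap.rTensor B N.subtype)) := by
  classical
  -- The S-linear analogue of `rTensor B P.subtype`, acting on `B ⊗[R] P`.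
  -- key equation relating `comm` with `rTensor`
  have key : ∀ (P : Submodule R M) (y : P ⊗[R] B),
      (TensorProduct.comm R M B) (LinearMap.rTensor B P.subtype y)
        = (AlgebraTensorModule.map (LinearMap.id : B →ₗ[S] B) P.subtype)
            (TensorProduct.comm R P B y) := by
    intro P y
    induction y using TensorProduct.induction_on with
    | zero => simp
    | tmul p b => simp
    | add a b ha hb => simp [map_add, ha, hb]
  have mem_iff : ∀ (P : Submodule R M) (z : M ⊗[R] B),
      z ∈ LinearMap.range (LinearMap.rTensor B P.subtype) ↔
      (TensorProduct.comm R M B) z ∈ LinearMap.range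
        (AlgebraTensorModule.map (LinearMap.id : B →ₗ[S] B) P.subtype) := by
    intro P z
    constructor
    · rintro ⟨y, rfl⟩
      exact ⟨TensorProduct.comm R P B y, (key P y).symm⟩
    · rintro ⟨w, hw⟩
      refine ⟨(TensorProduct.comm R P B).symm w, (TensorProduct.comm R M B).injective ?_⟩
      rw [key, LinearEquiv.apply_symm_apply, hw]
  -- S-submodules of B ⊗[R] M
  set gL := AlgebraTensorModule.map (LinearMap.id : B →ₗ[S] B) L.subtype with hgL
  set gN := AlgebraTensorModule.map (LinearMap.id : B →ₗ[S] B) N.subtype with hgN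
  set gK := AlgebraTensorModule.map (LinearMap.id : B →ₗ[S] B)
    (L ⊔ maximalIdeal R • N).subtype with hgK
  set QL := LinearMap.range gL with hQL
  set QN := LinearMap.range gN with hQN
  set QK := LinearMap.range gK with hQK
  have mem_range : ∀ (P : Submodule R M) (b : B) (p : M), p ∈ P →
      b ⊗ₜ[R] p ∈ LinearMap.range
        (AlgebraTensorModule.map (LinearMap.id : B →ₗ[S] B) P.subtype) :=
    fun P b p hp => ⟨b ⊗ₜ ⟨p, hp⟩, by simp⟩
  -- Step 0 : QL ≤ QN
  have hLN' : QL ≤ QN := by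
    rintro _ ⟨y, rfl⟩
    induction y using TensorProduct.induction_on with
    | zero => simp
    | tmul b l => simpa [hgL, hQN] using mem_range N b l.1 (hLN l.2)
    | add a c ha hc => rw [map_add]; exact QN.add_mem ha hc
  -- Step 1 : QN ≤ QK
  have hNK : QN ≤ QK := by
    rintro _ ⟨y, rfl⟩
    induction y using TensorProduct.induction_on with
    | zero => simp
    | tmul b n =>
      have h := hNak n.1 n.2 b
      rw [mem_iff] at h
      simpa [hgN, hQK] using h
    | add a c ha hc => rw [map_add]; exact QK.add_mem ha hc
  -- maximal ideal maps into maximal ideal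
  have hloc : ∀ r ∈ maximalIdeal R, algebraMap R S r ∈ maximalIdeal S := by
    intro r hr
    rw [mem_maximalIdeal, mem_nonunits_iff] at hr ⊢
    exact fun h => hr (IsUnit.of_map (algebraMap R S) r h)
  -- Step 2 : QK ≤ QL ⊔ (maximalIdeal S) • QN
  have hKsup : QK ≤ QL ⊔ (maximalIdeal S) • QN := by
    rintro _ ⟨y, rfl⟩
    induction y using TensorProduct.induction_on with
    | zero => simp
    | tmul b k =>
      have hk : (k : M) ∈ L ⊔ maximalIdeal R • N := k.2
      obtain ⟨l, hl, w, hw, hlw⟩ := Submodule.mem_sup.mp hk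
      have hbw : ∀ w ∈ (maximalIdeal R • N : Submodule R M),
          b ⊗ₜ[R] w ∈ (maximalIdeal S) • QN := by
        intro w hw
        refine Submodule.smul_induction_on hw (fun r hr n hn => ?_)
          (fun u v hu hv => by rw [tmul_add]; exact Submodule.add_mem _ hu hv)
        have : b ⊗ₜ[R] (r • n) = algebraMap R S r • (b ⊗ₜ[R] n) := by
          rw [algebraMap_smul, tmul_smul]
        rw [this]
        exact Submodule.smul_mem_smul (hloc r hr) (mem_range N b n hn)
      have : gK (b ⊗ₜ[R] k) = b ⊗ₜ[R] l + b ⊗ₜ[R] w := by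
        simp [hgK, ← hlw, tmul_add]
      rw [this]
      exact Submodule.add_mem _ (Submodule.mem_sup_left (mem_range L b l hl))
        (Submodule.mem_sup_right (hbw w hw))
    | add a c ha hc => rw [map_add]; exact Submodule.add_mem _ ha hc
  -- finiteness and Nakayama
  have hfin : Module.Finite S (B ⊗[R] M) :=
    Module.Finite.equiv (AlgebraTensorModule.cancelBaseChange R S S B M)
  have hNoeth : IsNoetherian S (B ⊗[R] M) := isNoetherian_of_isNoetherianRing_of_finite S _
  have hQNL : QN ≤ QL := by
    refine Submodule.le_of_le_smul_of_le_jacobson_bot (IsNoetherian.noetherian QN) ?_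
      (le_trans hNK hKsup)
    rw [IsLocalRing.jacobson_eq_maximalIdeal (⊥ : Ideal S) bot_ne_top]
  intro x
  constructor
  · intro h b
    rw [mem_iff]
    exact hLN' ((mem_iff L (x ⊗ₜ[R] b)).mp (h b))
  · intro h b
    rw [mem_iff]
    exact hQNL ((mem_iff N (x ⊗ₜ[R] b)).mp (h b))
end

section
/- Let (R,m) be a Noetherian local ring and B an R-algebra such that mB is contained in the Jacobson radical of B. Then the module closure cl_B is a Nakayama closure on finitely generated R-modules: if L ⊆ N ⊆ M are finitely generated R-modules with N ⊆ (L + mN)^{cl_B}_M, then L^{cl_B}_M = N^{cl_B}_M. -/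
open TensorProduct IsLocalRing

private lemma range_baseChange_subtype {R B M : Type*} [CommRing R] [CommRing B] [Algebra R B]
    [AddCommGroup M] [Module R M] (P : Submodule R M) :
    LinearMap.range (P.subtype.baseChange B) = P.baseChange B := by
  apply le_antisymm
  · rintro _ ⟨t, rfl⟩
    induction t using TensorProduct.induction_on with
    | zero => simp
    | tmul b p => simpa using Submodule.tmul_mem_baseChange_of_mem b p.2
    | add s t hs ht => rw [map_add]; exact add_mem hs ht
  · rw [Submodule.baseChange_eq_span, Submodule.span_le]
    rintro _ ⟨m, hm, rfl⟩
    exact ⟨(1 : B) ⊗ₜ ⟨m, hm⟩, rfl⟩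

private lemma mem_range_rTensor_iff {R B M : Type*} [CommRing R] [CommRing B] [Algebra R B]
    [AddCommGroup M] [Module R M] (P : Submodule R M) (x : M) :
    x ⊗ₜ[R] (1 : B) ∈ LinearMap.range (LinearMap.rTensor B P.subtype) ↔
      (1 : B) ⊗ₜ[R] x ∈ P.baseChange B := by
  have key : ∀ t : P ⊗[R] B,
      TensorProduct.comm R M B (LinearMap.rTensor B P.subtype t) =
        P.subtype.baseChange B (TensorProduct.comm R P B t) := by
    intro t
    induction t using TensorProduct.induction_on with
    | zero => simp
    | tmul p b => simp
    | add s t hs ht => simp [map_add, hs, ht]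
  rw [← range_baseChange_subtype (B := B) P]
  constructor
  · rintro ⟨t, ht⟩
    refine ⟨TensorProduct.comm R P B t, ?_⟩
    rw [← key, ht]
    simp
  · rintro ⟨u, hu⟩
    refine ⟨(TensorProduct.comm R P B).symm u, ?_⟩
    apply (TensorProduct.comm R M B).injective
    rw [key]
    simpa using hu

/-- If `(R,m)` is Noetherian local and `B` is an `R`-algebra with `mB`
contained in the Jacobson radical of `B`, then the algebra closure `cl_B` (where
`x ∈ L^{cl_B}_M` iff `x ⊗ 1` lies in the image of `L ⊗_R B → M ⊗_R B`) is a
Nakayama closure on finitely generated `R`-modules. -/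
theorem algebraClosure_isNakayama
    {R : Type*} [CommRing R] [IsNoetherianRing R] [IsLocalRing R]
    (B : Type*) [CommRing B] [Algebra R B]
    (hJac : Ideal.map (algebraMap R B) (maximalIdeal R) ≤ (⊥ : Ideal B).jacobson)
    {M : Type*} [AddCommGroup M] [Module R M] [Module.Finite R M]
    (L N : Submodule R M) (hLN : L ≤ N)
    (hNak : ∀ x ∈ N,
      x ⊗ₜ[R] (1 : B) ∈ LinearMap.range
        (LinearMap.rTensor B (L ⊔ maximalIdeal R • N).subtype)) :
    ∀ x : M,
      (x ⊗ₜ[R] (1 : B) ∈ LinearMap.range (LinearMap.rTensor B L.subtype)) ↔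
      (x ⊗ₜ[R] (1 : B) ∈ LinearMap.range (LinearMap.rTensor B N.subtype)) := by
  set J := (maximalIdeal R).map (algebraMap R B) with hJ
  -- the base change of `N` is finitely generated over `B`
  have hNfg : N.FG := IsNoetherian.noetherian N
  obtain ⟨s, hs⟩ := hNfg
  have hNBfg : (N.baseChange B).FG := by
    rw [← hs, Submodule.baseChange_span]
    exact Submodule.fg_span ((s.finite_toSet.image _))
  -- elements of `m • N` base-change into `J • N.baseChange B`
  have hmN : ∀ z ∈ maximalIdeal R • N, (1 : B) ⊗ₜ[R] z ∈ J • N.baseChange B := by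
    intro z hz
    refine Submodule.smul_induction_on hz (fun r hr n hn => ?_) (fun a b ha hb => ?_)
    · have : (1 : B) ⊗ₜ[R] (r • n) = (algebraMap R B r) • ((1 : B) ⊗ₜ[R] n) := by
        rw [tmul_smul, algebraMap_smul]
      rw [this]
      exact Submodule.smul_mem_smul (Ideal.mem_map_of_mem _ hr)
        (Submodule.tmul_mem_baseChange_of_mem 1 hn)
    · rw [tmul_add]; exact add_mem ha hb
  -- base change of `L ⊔ m•N` is contained in `L.baseChange ⊔ J • N.baseChange`
  have hsub : (L ⊔ maximalIdeal R • N).baseChange B ≤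
      L.baseChange B ⊔ J • N.baseChange B := by
    rw [Submodule.baseChange_eq_span, Submodule.span_le]
    rintro _ ⟨y, hy, rfl⟩
    obtain ⟨l, hl, z, hz, rfl⟩ := Submodule.mem_sup.mp hy
    have : (TensorProduct.mk R B M 1) (l + z) = (1 : B) ⊗ₜ[R] l + (1 : B) ⊗ₜ[R] z := by
      simp [tmul_add]
    rw [this]
    exact add_mem (Submodule.mem_sup_left (Submodule.tmul_mem_baseChange_of_mem 1 hl))
      (Submodule.mem_sup_right (hmN z hz))
  -- Nakayama step over `B`
  have step : N.baseChange B ≤ L.baseChange B ⊔ J • N.baseChange B := by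
    nth_rw 1 [Submodule.baseChange_eq_span]; rw [Submodule.span_le]
    rintro _ ⟨y, hy, rfl⟩
    exact hsub ((mem_range_rTensor_iff _ y).mp (hNak y hy))
  have hNB : N.baseChange B ≤ L.baseChange B :=
    Submodule.le_of_le_smul_of_le_jacobson_bot hNBfg hJac step
  have hmono : L.baseChange B ≤ N.baseChange B :=
    Submodule.baseChange_mono B hLN
  intro x
  rw [mem_range_rTensor_iff, mem_range_rTensor_iff]
  exact ⟨fun h => hmono h, fun h => hNB h⟩
end

section
/- Let (R,m) be a Noetherian local ring and {cl_j}_{j∈Γ} a directed family of residual, functorial Nakayama closure operations on finitely generated R-modules (Γ directed, and cl_j ≤ cl_{j'} whenever j ≤ j'). Suppose cl defined by L^{cl}_M = ∪_j L^{cl_j}_M is idempotent (hence a closure operation). Then cl is a Nakayama closure. -/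
open IsLocalRing

/-- A directed union of residual, functorial Nakayama closure operations on
finitely generated modules over a Noetherian local ring, if idempotent, is again a
Nakayama closure. -/
theorem directed_sup_of_nakayama_closures_isNakayama
    {R : Type} [CommRing R] [IsNoetherianRing R] [IsLocalRing R]
    {Γ : Type} [Preorder Γ] [IsDirected Γ (· ≤ ·)] [Nonempty Γ]
    (c : Γ → ∀ (M : Type) [AddCommGroup M] [Module R M] [Module.Finite R M],
      Submodule R M → Submodule R M)
    -- each `c j` is a closure operation:
    (hext : ∀ j (M : Type) [AddCommGroup M] [Module R M] [Module.Finite R M]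
      (L : Submodule R M), L ≤ c j M L)
    (hmono : ∀ j (M : Type) [AddCommGroup M] [Module R M] [Module.Finite R M]
      (L L' : Submodule R M), L ≤ L' → c j M L ≤ c j M L')
    (hidem : ∀ j (M : Type) [AddCommGroup M] [Module R M] [Module.Finite R M]
      (L : Submodule R M), c j M (c j M L) = c j M L)
    -- each `c j` is residual:
    (hres : ∀ j (M : Type) [AddCommGroup M] [Module R M] [Module.Finite R M]
      (P : Type) [AddCommGroup P] [Module R P] [Module.Finite R P]
      (q : M →ₗ[R] P), Function.Surjective q →
        c j M (LinearMap.ker q) = Submodule.comap q (c j P ⊥))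
    -- each `c j` is functorial:
    (hfun : ∀ j (M : Type) [AddCommGroup M] [Module R M] [Module.Finite R M]
      (P : Type) [AddCommGroup P] [Module R P] [Module.Finite R P]
      (g : M →ₗ[R] P) (L : Submodule R M),
        Submodule.map g (c j M L) ≤ c j P (Submodule.map g L))
    -- each `c j` is Nakayama:
    (hNak : ∀ j (M : Type) [AddCommGroup M] [Module R M] [Module.Finite R M]
      (L N : Submodule R M), L ≤ N → N ≤ c j M (L ⊔ maximalIdeal R • N) →
        c j M L = c j M N)
    -- the family is directed:
    (hdir : ∀ j j' : Γ, j ≤ j' → ∀ (M : Type) [AddCommGroup M] [Module R M]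
      [Module.Finite R M] (L : Submodule R M), c j M L ≤ c j' M L)
    -- the union `cl := ⨆ j, c j` is assumed idempotent:
    (hidem' : ∀ (M : Type) [AddCommGroup M] [Module R M] [Module.Finite R M]
      (L : Submodule R M), (⨆ j, c j M (⨆ j', c j' M L)) = ⨆ j, c j M L) :
    -- conclusion: `cl` is a Nakayama closure
    ∀ (M : Type) [AddCommGroup M] [Module R M] [Module.Finite R M]
      (L N : Submodule R M), L ≤ N → N ≤ ⨆ j, c j M (L ⊔ maximalIdeal R • N) →
        (⨆ j, c j M L) = ⨆ j, c j M N := by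
  intro M _ _ _ L N hLN hN
  -- N is finitely generated, hence compact
  have hNfg : N.FG := IsNoetherian.noetherian N
  have hcomp := (Submodule.fg_iff_compact N).mp hNfg
  obtain ⟨s, hs⟩ := CompleteLattice.IsCompactElement.exists_finset_of_le_iSup _ hcomp _ hN
  -- find an upper bound j0 of the finset s
  obtain ⟨j0, hj0⟩ := s.exists_le
  have hNj0 : N ≤ c j0 M (L ⊔ maximalIdeal R • N) := by
    refine hs.trans ?_
    refine iSup_le fun j => iSup_le fun hj => ?_
    exact hdir j j0 (hj0 j hj) M _
  apply le_antisymm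
  · exact iSup_mono fun j => hmono j M _ _ hLN
  · refine iSup_le fun j => ?_
    obtain ⟨j', hjj', hj0j'⟩ := exists_ge_ge j j0
    have hkey : c j' M L = c j' M N :=
      hNak j' M L N hLN (hNj0.trans (hdir j0 j' hj0j' M _))
    calc c j M N ≤ c j' M N := hdir j j' hjj' M N
      _ = c j' M L := hkey.symm
      _ ≤ ⨆ j, c j M L := le_iSup (fun j => c j M L) j'
end

section
/- Let (R, m, k) be a Noetherian local ring and A a Matlis-dualizable R-module (A ≅ A^∨∨ via the biduality map). Elements g_1, …, g_t ∈ A^∨ = Hom_R(A, E_R(k)) satisfy ∩_{i=1}^t ker(g_i) = 0 if and only if g_1, …, g_t generate A^∨ as an R-module. -/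
open IsLocalRing

universe w

/-- If a submodule and the corresponding quotient are both small, the module is small. -/
lemma small_of_submodule_quotient {R M : Type*} [Ring R] [AddCommGroup M] [Module R M]
    (N : Submodule R M) [Small.{w} N] [Small.{w} (M ⧸ N)] : Small.{w} M := by
  set s : (M ⧸ N) → M := Function.surjInv N.mkQ_surjective with hs
  have hsec : ∀ q : M ⧸ N, N.mkQ (s q) = q := fun q =>
    Function.surjInv_eq N.mkQ_surjective q
  have hmem : ∀ x : M, x - s (N.mkQ x) ∈ N := by
    intro x
    have h0 : N.mkQ (x - s (N.mkQ x)) = 0 := by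
      rw [map_sub, hsec, sub_self]
    rwa [Submodule.mkQ_apply, Submodule.Quotient.mk_eq_zero] at h0
  refine small_of_injective (β := (M ⧸ N) × N)
    (f := fun x => (N.mkQ x, ⟨x - s (N.mkQ x), hmem x⟩)) ?_
  intro x y h
  obtain ⟨h1, h2⟩ := Prod.mk.injEq .. ▸ h
  have h2' : x - s (N.mkQ x) = y - s (N.mkQ y) := congrArg Subtype.val h2
  rw [h1] at h2'
  exact sub_left_injective h2'

/-- A finitely generated module killed by the maximal ideal is small whenever the
residue field is small. -/
lemma small_of_fg_of_smul_maximalIdeal {R : Type*} [CommRing R] [IsLocalRing R]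
    {M : Type*} [AddCommGroup M] [Module R M] [Small.{w} (ResidueField R)]
    (hfg : (⊤ : Submodule R M).FG)
    (htor : ∀ r ∈ maximalIdeal R, ∀ x : M, r • x = 0) : Small.{w} M := by
  obtain ⟨t, ht⟩ := hfg
  haveI : Small.{w} (↥t) := Countable.toSmall _
  set lift : ResidueField R → R := Function.surjInv Ideal.Quotient.mk_surjective with hl
  have hlift : ∀ a : ResidueField R, residue R (lift a) = a := fun a =>
    Function.surjInv_eq Ideal.Quotient.mk_surjective a
  refine small_of_surjective (α := (↥t : Type _) → ResidueField R)
    (f := fun c => ∑ x ∈ t.attach, (lift (c x)) • (x : M)) ?_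
  intro y
  have hy : y ∈ Submodule.span R (↑t : Set M) := by rw [ht]; trivial
  obtain ⟨f, -, hf⟩ := Submodule.mem_span_finset.1 hy
  refine ⟨fun x => residue R (f (x : M)), ?_⟩
  have key : ∀ x ∈ t.attach,
      (lift (residue R (f (x : M)))) • (x : M) = f (x : M) • (x : M) := by
    intro x _
    have hmem : lift (residue R (f (x : M))) - f (x : M) ∈ maximalIdeal R := by
      have h0 : residue R (lift (residue R (f (x : M))) - f (x : M)) = 0 := by
        rw [map_sub, hlift, sub_self]
      exact Ideal.Quotient.eq_zero_iff_mem.1 h0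
    have hkill := htor _ hmem (x : M)
    have hdec : lift (residue R (f (x : M)))
        = f (x : M) + (lift (residue R (f (x : M))) - f (x : M)) := by ring
    rw [hdec, add_smul, hkill, add_zero]
  dsimp only
  rw [Finset.sum_congr rfl key, ← hf]
  exact (Finset.sum_attach t fun m => f m • m)

/-- A Noetherian local ring with small residue field is small. -/
lemma small_of_noetherian_local {R : Type*} [CommRing R] [IsNoetherianRing R] [IsLocalRing R]
    [Small.{w} (ResidueField R)] : Small.{w} R := by
  -- each R ⧸ m^n is small
  have key : ∀ n : ℕ, Small.{w} (R ⧸ (maximalIdeal R ^ n : Ideal R)) := by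
    intro n
    induction n with
    | zero =>
      have : Subsingleton (R ⧸ (maximalIdeal R ^ 0 : Ideal R)) := by
        rw [Submodule.Quotient.subsingleton_iff]
        simp [Ideal.one_eq_top]
      exact small_subsingleton _
    | succ n ih =>
      haveI := ih
      set φ : (R ⧸ (maximalIdeal R ^ (n + 1) : Ideal R)) →ₗ[R]
          (R ⧸ (maximalIdeal R ^ n : Ideal R)) :=
        Submodule.mapQ _ _ LinearMap.id
          (by exact Ideal.pow_le_pow_right (Nat.le_succ n)) with hφ
      haveI : Small.{w} (LinearMap.ker φ) := by
        refine small_of_fg_of_smul_maximalIdeal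
          (Submodule.fg_top _ |>.2 (IsNoetherian.noetherian _)) ?_
        rintro r hr ⟨x, hx⟩
        obtain ⟨z, rfl⟩ := Submodule.Quotient.mk_surjective _ x
        have hz : z ∈ (maximalIdeal R ^ n : Ideal R) := by
          have h0 : φ (Submodule.Quotient.mk z) = 0 := hx
          rwa [hφ, Submodule.mapQ_apply, LinearMap.id_apply,
            Submodule.Quotient.mk_eq_zero] at h0
        have hrz : r • z ∈ (maximalIdeal R ^ (n + 1) : Ideal R) := by
          rw [pow_succ, smul_eq_mul, mul_comm r z]
          exact Ideal.mul_mem_mul hz hr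
        apply Subtype.ext
        show r • (Submodule.Quotient.mk z : R ⧸ (maximalIdeal R ^ (n + 1) : Ideal R)) = 0
        rw [← Submodule.Quotient.mk_smul, Submodule.Quotient.mk_eq_zero]
        exact hrz
      haveI : Small.{w} ((R ⧸ (maximalIdeal R ^ (n + 1) : Ideal R)) ⧸ LinearMap.ker φ) :=
        small_of_injective φ.quotKerEquivRange.injective
      exact small_of_submodule_quotient (LinearMap.ker φ)
  haveI := key
  refine small_of_injective (β := ∀ n : ℕ, R ⧸ (maximalIdeal R ^ n : Ideal R))
    (f := fun r n => (maximalIdeal R ^ n : Ideal R).mkQ r) ?_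
  intro a b h
  have hab : a - b ∈ (⨅ n : ℕ, maximalIdeal R ^ n : Ideal R) := by
    refine Submodule.mem_iInf _ |>.2 fun n => ?_
    have h0 := congrFun h n
    dsimp only at h0
    rwa [Submodule.mkQ_apply, Submodule.mkQ_apply, Submodule.Quotient.eq] at h0
  rw [Ideal.iInf_pow_eq_bot_of_isLocalRing _ (Ideal.IsMaximal.ne_top inferInstance)] at hab
  exact sub_eq_zero.1 hab

/-- Let `(R,m,k)` be Noetherian local, `E = E_R(k)`, and `A` a
Matlis-dualizable module.  Elements `g_1, …, g_t ∈ A^∨ = Hom_R(A,E)` have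
`⋂ ker g_i = 0` (i.e. they co-generate `A`) iff they generate `A^∨`. -/
theorem cogenerate_iff_generate_dual
    {R : Type*} [CommRing R] [IsNoetherianRing R] [IsLocalRing R]
    {E : Type*} [AddCommGroup E] [Module R E]
    (hinj : Module.Injective R E)
    (ι : ResidueField R →ₗ[R] E) (hι : Function.Injective ι)
    (hess : ∀ N : Submodule R E, N ≠ ⊥ → LinearMap.range ι ⊓ N ≠ ⊥)
    {A : Type*} [AddCommGroup A] [Module R A]
    -- `A` is Matlis dualizable (the biduality map is bijective):
    (hA : Function.Bijective
      ((LinearMap.id : (A →ₗ[R] E) →ₗ[R] (A →ₗ[R] E)).flip))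
    {t : ℕ} (g : Fin t → (A →ₗ[R] E)) :
    (⨅ i, LinearMap.ker (g i)) = ⊥ ↔ Submodule.span R (Set.range g) = ⊤ := by
  set ev := ((LinearMap.id : (A →ₗ[R] E) →ₗ[R] (A →ₗ[R] E)).flip) with hev
  constructor
  · -- cogenerate → generate
    intro hker
    by_contra hS
    set S := Submodule.span R (Set.range g) with hSdef
    have hex : ∃ f₀ : A →ₗ[R] E, f₀ ∉ S := by
      by_contra h
      push_neg at h
      exact hS (Submodule.eq_top_iff'.2 h)
    obtain ⟨f₀, hf₀⟩ := hex
    set C := (A →ₗ[R] E) ⧸ S with hC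
    set c : C := S.mkQ f₀ with hc
    have hc0 : c ≠ 0 := by
      intro h
      rw [hc, Submodule.mkQ_apply, Submodule.Quotient.mk_eq_zero] at h
      exact hf₀ h
    -- Baer criterion for E (uses smallness of R)
    have hbaer : Module.Baer R E :=
      @Module.Baer.of_injective R _ E _ _
        (@small_of_noetherian_local R _ _ _ (small_of_injective hι)) hinj
    -- the cyclic submodule generated by c
    set π : R →ₗ[R] C := LinearMap.toSpanSingleton R C c with hπ
    have hJ : LinearMap.ker π ≠ ⊤ := by
      intro h
      have h1 : (1 : R) ∈ LinearMap.ker π := h ▸ trivial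
      have h2 : π 1 = 0 := h1
      rw [hπ, LinearMap.toSpanSingleton_apply, one_smul] at h2
      exact hc0 h2
    have hJm : LinearMap.ker π ≤ maximalIdeal R := le_maximalIdeal hJ
    -- the map R ⧸ ker π → E through the residue field
    set τ : (R ⧸ LinearMap.ker π) →ₗ[R] E :=
      ι ∘ₗ Submodule.mapQ (LinearMap.ker π) (maximalIdeal R) LinearMap.id hJm with hτ
    set πbar : (R ⧸ LinearMap.ker π) →ₗ[R] C :=
      (LinearMap.ker π).liftQ π le_rfl with hπbar
    have hπbarinj : Function.Injective πbar := by
      rw [← LinearMap.ker_eq_bot, hπbar, Submodule.ker_liftQ_eq_bot]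
      exact le_rfl
    obtain ⟨ψ, hψ⟩ := hbaer.extension_property πbar hπbarinj τ
    -- ψ is nonzero at c
    have hψc : ψ c ≠ 0 := by
      have h1 : ψ (πbar (Submodule.Quotient.mk (1 : R))) = τ (Submodule.Quotient.mk (1 : R)) :=
        LinearMap.congr_fun hψ (Submodule.Quotient.mk (1 : R))
      have h2 : πbar (Submodule.Quotient.mk (1 : R)) = c := by
        rw [hπbar, Submodule.liftQ_apply, hπ, LinearMap.toSpanSingleton_apply, one_smul]
      have h3 : τ (Submodule.Quotient.mk (1 : R))
          = ι (Submodule.Quotient.mk (1 : R)) := rfl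
      rw [h2] at h1
      rw [h1, h3]
      intro h
      have h4 : (Submodule.Quotient.mk (1 : R) : ResidueField R) = 0 :=
        hι (h.trans (map_zero ι).symm)
      rw [Submodule.Quotient.mk_eq_zero] at h4
      exact (Ideal.IsMaximal.ne_top inferInstance) (Ideal.eq_top_of_isUnit_mem _ h4 isUnit_one)
    -- now pull back through the biduality map
    set ψ' : (A →ₗ[R] E) →ₗ[R] E := ψ ∘ₗ S.mkQ with hψ'
    obtain ⟨x, hx⟩ := hA.surjective ψ'
    have hxi : ∀ i, g i x = 0 := by
      intro i
      have h5 : g i x = ψ' (g i) := by rw [← hx]; rfl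
      have h6 : S.mkQ (g i) = 0 := by
        rw [Submodule.mkQ_apply, Submodule.Quotient.mk_eq_zero]
        exact Submodule.subset_span ⟨i, rfl⟩
      rw [h5, hψ', LinearMap.comp_apply, h6, map_zero]
    have hx0 : x = 0 := by
      have hxm : x ∈ (⨅ i, LinearMap.ker (g i)) := Submodule.mem_iInf _ |>.2 fun i => hxi i
      rwa [hker, Submodule.mem_bot] at hxm
    have hcontra : ψ' f₀ = 0 := by
      rw [← hx, hx0, map_zero]
      rfl
    rw [hψ', LinearMap.comp_apply] at hcontra
    exact hψc hcontra
  · -- generate → cogenerate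
    intro hspan
    refine (Submodule.eq_bot_iff _).2 fun x hx => ?_
    have hgx : ∀ i, g i x = 0 := fun i => (Submodule.mem_iInf _).1 hx i
    have hall : ∀ f : A →ₗ[R] E, f x = 0 := by
      intro f
      have hf : f ∈ Submodule.span R (Set.range g) := hspan ▸ Submodule.mem_top
      induction hf using Submodule.span_induction with
      | mem f hf => obtain ⟨i, rfl⟩ := hf; exact hgx i
      | zero => rfl
      | add f₁ f₂ _ _ h₁ h₂ => rw [LinearMap.add_apply, h₁, h₂, add_zero]
      | smul r f _ h => rw [LinearMap.smul_apply, h, smul_zero]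
    have hevx : ev x = 0 := LinearMap.ext fun f => hall f
    exact hA.injective (by rw [hevx, map_zero])
end

section
/- Let (R, m, k) be a Noetherian local ring and A an Artinian R-module. Then g_1, …, g_t ∈ Hom_R(A, E_R(k)) satisfy ∩_i ker(g_i) = 0 if and only if the restrictions of the g_i to soc A (which land in the copy of k inside E) span Hom_R(soc A, k) as a k-vector space. -/
open IsLocalRing

/-- The socle of a module over a local ring: the elements killed by the maximal ideal. -/
def socle (R M : Type*) [CommRing R] [IsLocalRing R] [AddCommGroup M] [Module R M] :
    Submodule R M where
  carrier := {x | ∀ r ∈ maximalIdeal R, r • x = 0}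
  add_mem' := by
    intro a b ha hb r hr
    rw [smul_add, ha r hr, hb r hr, add_zero]
  zero_mem' := by intro r hr; simp
  smul_mem' := by
    intro c x hx r hr
    rw [smul_comm, hx r hr, smul_zero]

/-- In an Artinian module, beneath every nonzero element there is a nonzero socle element. -/
lemma exists_socle_le {R A : Type*} [CommRing R] [IsLocalRing R] [AddCommGroup A] [Module R A]
    [IsArtinian R A] {x : A} (hx : x ≠ 0) :
    ∃ y, y ∈ socle R A ∧ y ≠ 0 ∧ ∃ r : R, r • x = y := by
  haveI : IsAtomic (Submodule R A) := isAtomic_of_orderBot_wellFounded_lt wellFounded_lt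
  have hspan : (Submodule.span R {x} : Submodule R A) ≠ ⊥ := by
    simpa [Submodule.span_singleton_eq_bot] using hx
  obtain ⟨S, hS, hSle⟩ := (eq_bot_or_exists_atom_le (Submodule.span R {x})).resolve_left hspan
  obtain ⟨y, hyS, hy0⟩ := Submodule.ne_bot_iff S |>.mp hS.1
  have hspanyS : Submodule.span R {y} = S := by
    rcases (hS.le_iff.mp ((Submodule.span_singleton_le_iff_mem y S).mpr hyS)) with h | h
    · exact absurd (by simpa [Submodule.span_singleton_eq_bot] using h) hy0
    · exact h
  have hFG : S.FG := ⟨{y}, by simpa using hspanyS⟩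
  have hmS : maximalIdeal R • S = ⊥ := by
    by_contra hne
    have hle : maximalIdeal R • S ≤ S := Submodule.smul_le_right
    have heq : maximalIdeal R • S = S := (hS.le_iff.mp hle).resolve_left hne
    have := Submodule.eq_bot_of_le_smul_of_le_jacobson_bot (maximalIdeal R) S hFG heq.ge
      (IsLocalRing.maximalIdeal_le_jacobson ⊥)
    exact hS.1 this
  refine ⟨y, fun r hr => ?_, hy0, ?_⟩
  · have : r • y ∈ maximalIdeal R • S := Submodule.smul_mem_smul hr hyS
    rw [hmS] at this; simpa using this
  · exact Submodule.mem_span_singleton.mp (hSle hyS)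

/-- Socle elements of `E` lie in the image of `ι`. -/
lemma socle_le_range {R E : Type*} [CommRing R] [IsLocalRing R] [AddCommGroup E] [Module R E]
    (ι : ResidueField R →ₗ[R] E) (hι : Function.Injective ι)
    (hess : ∀ N : Submodule R E, N ≠ ⊥ → LinearMap.range ι ⊓ N ≠ ⊥)
    {x : E} (hx : x ∈ socle R E) : x ∈ LinearMap.range ι := by
  rcases eq_or_ne x 0 with rfl | hx0
  · exact Submodule.zero_mem _
  have hspan : (Submodule.span R {x} : Submodule R E) ≠ ⊥ := by
    simpa [Submodule.span_singleton_eq_bot] using hx0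
  obtain ⟨z, hz, hz0⟩ := Submodule.ne_bot_iff _ |>.mp (hess _ hspan)
  obtain ⟨⟨a, rfl⟩, hzx⟩ := hz
  obtain ⟨r, hr⟩ := Submodule.mem_span_singleton.mp hzx
  have ha0 : a ≠ 0 := fun h => hz0 (by rw [h, map_zero])
  obtain ⟨s, hs⟩ := residue_surjective (R := R) a⁻¹
  have key : ι 1 = (s * r) • x := by
    have : s • (a : ResidueField R) = 1 := by
      show residue R s * a = 1
      rw [hs, inv_mul_cancel₀ ha0]
    calc ι 1 = ι (s • a) := by rw [this]
    _ = s • ι a := by rw [map_smul]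
    _ = s • (r • x) := by rw [hr]
    _ = (s * r) • x := by rw [mul_smul]
  have hunit : IsUnit (s * r) := by
    by_contra hnu
    have : (s * r) • x = 0 := hx _ hnu
    rw [← key] at this
    exact one_ne_zero (hι (by simpa using this))
  refine ⟨((hunit.unit⁻¹ : Rˣ) : R) • 1, ?_⟩
  rw [map_smul, key, ← mul_smul]
  calc (((hunit.unit⁻¹ : Rˣ) : R) * (s * r)) • x
      = ((1 : R)) • x := by
        congr 1
        have := hunit.unit.inv_mul
        simpa [IsUnit.unit_spec] using this
    _ = x := one_smul R x

/-- Let `(R,m,k)` be Noetherian local, `E = E_R(k)` with embedding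
`ι : k → E`, and `A` an Artinian module.  Maps `g_1, …, g_t : A → E` satisfy
`⋂ ker g_i = 0` iff their restrictions to `soc A` (which land in the copy of `k`
inside `E`) span `Hom_R(soc A, k)`: every `h : soc A → k` satisfies
`ι ∘ h = ∑ c_i • (g_i |_{soc A})` for some coefficients `c_i`. -/
theorem cogenerate_iff_restrictions_span_socle_dual
    {R : Type*} [CommRing R] [IsNoetherianRing R] [IsLocalRing R]
    {E : Type*} [AddCommGroup E] [Module R E]
    (hinj : Module.Injective R E)
    (ι : ResidueField R →ₗ[R] E) (hι : Function.Injective ι)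
    (hess : ∀ N : Submodule R E, N ≠ ⊥ → LinearMap.range ι ⊓ N ≠ ⊥)
    {A : Type*} [AddCommGroup A] [Module R A] [IsArtinian R A]
    {t : ℕ} (g : Fin t → (A →ₗ[R] E)) :
    (⨅ i, LinearMap.ker (g i)) = ⊥ ↔
      ∀ h : ↥(socle R A) →ₗ[R] ResidueField R, ∃ c : Fin t → R,
        ι.comp h = ∑ i, c i • ((g i).comp (socle R A).subtype) := by
  constructor
  · -- ⟹ : from triviality of the joint kernel, every functional on the socle is a combination
    intro hker h
    -- the joint evaluation map
    set G : A →ₗ[R] (Fin t → E) := LinearMap.pi g with hG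
    have hGinj : Function.Injective G := by
      rw [← LinearMap.ker_eq_bot, LinearMap.ker_pi]
      exact hker
    set S' : Submodule R (Fin t → E) := (socle R A).map G with hS'
    set q : ↥(socle R A) ≃ₗ[R] ↥S' := Submodule.equivMapOfInjective G hGinj (socle R A) with hq
    set ψ : ↥S' →ₗ[R] E := (ι.comp h).comp q.symm.toLinearMap with hψ
    obtain ⟨φ, hφ⟩ := hinj.out S'.subtype (Submodule.injective_subtype S') ψ
    -- φ extends ι ∘ h through G on the socle
    have hGy : ∀ y : ↥(socle R A), φ (G (y : A)) = ι (h y) := by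
      intro y
      have h1 : ((q y : Fin t → E)) = G (y : A) :=
        Submodule.coe_equivMapOfInjective_apply G hGinj (socle R A) y
      have h2 := hφ (q y)
      rw [Submodule.subtype_apply, h1] at h2
      rw [h2, hψ]
      simp
    -- the coordinate inclusions
    set sing : Fin t → (E →ₗ[R] (Fin t → E)) := fun i => LinearMap.single R (fun _ => E) i
      with hsing
    -- the images of the basis vectors under φ lie in the socle, hence in the image of ι
    have hsocE : ∀ i : Fin t, φ (sing i (ι 1)) ∈ socle R E := by
      intro i r hr
      have h1 : r • (1 : ResidueField R) = 0 := by
        show residue R r * 1 = 0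
        rw [mul_one]
        exact Ideal.Quotient.eq_zero_iff_mem.mpr hr
      calc r • φ (sing i (ι 1)) = φ (sing i (ι (r • 1))) := by
            rw [← map_smul φ, ← map_smul (sing i), ← map_smul ι]
        _ = 0 := by rw [h1, map_zero, map_zero, map_zero]
    have hc : ∀ i : Fin t, ∃ cc : R, φ (sing i (ι 1)) = cc • ι 1 := by
      intro i
      obtain ⟨a, ha⟩ := socle_le_range ι hι hess (hsocE i)
      obtain ⟨cc, hcc⟩ := residue_surjective (R := R) a
      refine ⟨cc, ?_⟩
      rw [← ha, ← map_smul]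
      congr 1
      show a = residue R cc * 1
      rw [mul_one, hcc]
    choose c hcspec using hc
    refine ⟨c, ?_⟩
    ext y
    -- each g i sends the socle of A into the socle of E
    have hsocgi : ∀ i : Fin t, (g i) (y : A) ∈ socle R E := by
      intro i r hr
      calc r • g i (y : A) = g i (r • (y : A)) := (map_smul (g i) r _).symm
        _ = g i 0 := by rw [y.2 r hr]
        _ = 0 := map_zero _
    -- termwise computation
    have hterm : ∀ i : Fin t, φ (sing i (g i (y : A))) = c i • g i (y : A) := by
      intro i
      obtain ⟨b, hb⟩ := socle_le_range ι hι hess (hsocgi i)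
      obtain ⟨s, hsb⟩ := residue_surjective (R := R) b
      have hgy : g i (y : A) = s • ι 1 := by
        rw [← hb, ← map_smul]
        congr 1
        show b = residue R s * 1
        rw [mul_one, hsb]
      rw [hgy, map_smul (sing i), map_smul φ, hcspec i, ← mul_smul, mul_comm, mul_smul]
    -- putting things together
    have hdecomp : G (y : A) = ∑ i, sing i (g i (y : A)) := by
      have h0 := Finset.univ_sum_single (G (y : A))
      rw [← h0]
      apply Finset.sum_congr rfl
      intro i _
      rw [hsing, hG]
      simp [LinearMap.pi_apply]
    calc (ι.comp h) y = φ (G (y : A)) := (hGy y).symm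
      _ = ∑ i, φ (sing i (g i (y : A))) := by rw [hdecomp, map_sum]
      _ = ∑ i, c i • g i (y : A) := Finset.sum_congr rfl fun i _ => hterm i
      _ = (∑ i, c i • ((g i).comp (socle R A).subtype)) y := by
        simp [LinearMap.sum_apply]
  · -- ⟸ : spanning implies the joint kernel is trivial
    intro hspan
    rw [eq_bot_iff]
    intro x hx
    by_contra hx0
    simp only [Submodule.mem_bot] at hx0
    have hx' : x ∈ ⨅ i, LinearMap.ker (g i) := hx
    obtain ⟨y, hyS, hy0, r, hry⟩ := exists_socle_le (R := R) hx0
    have hgy : ∀ i, g i y = 0 := by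
      intro i
      have hxi : g i x = 0 := by
        have := (Submodule.mem_iInf _).mp hx' i
        simpa using this
      rw [← hry, map_smul, hxi, smul_zero]
    -- the socle is a vector space over the residue field
    have hTor : Module.IsTorsionBySet R ↥(socle R A) (maximalIdeal R) := by
      intro z a
      exact Subtype.ext (z.2 a.1 a.2)
    letI instk : Module (ResidueField R) ↥(socle R A) := hTor.module
    letI insttow : IsScalarTower R (ResidueField R) ↥(socle R A) := hTor.isScalarTower
    -- pick a functional not vanishing on y
    have hyne : (⟨y, hyS⟩ : ↥(socle R A)) ≠ 0 := by
      intro hcontr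
      exact hy0 (by simpa using congrArg Subtype.val hcontr)
    have : ∃ φ : Module.Dual (ResidueField R) ↥(socle R A), φ ⟨y, hyS⟩ ≠ 0 := by
      by_contra hcontr
      push_neg at hcontr
      exact hyne ((Module.forall_dual_apply_eq_zero_iff (ResidueField R) _).mp hcontr)
    obtain ⟨φ, hφ0⟩ := this
    obtain ⟨c, hcomb⟩ := hspan (φ.restrictScalars R)
    have := LinearMap.congr_fun hcomb ⟨y, hyS⟩
    simp only [LinearMap.comp_apply, LinearMap.sum_apply, LinearMap.smul_apply,
      Submodule.subtype_apply, LinearMap.coe_restrictScalars] at this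
    have hzero : ι (φ ⟨y, hyS⟩) = 0 := by
      rw [this]
      refine Finset.sum_eq_zero fun i _ => ?_
      rw [hgy i, smul_zero]
    exact hφ0 (hι (by simpa using hzero))
end

section
/- Let (R, m, k) be a Noetherian local ring and A an Artinian R-module, and let g_1, …, g_t ∈ Hom_R(A, E_R(k)) be a co-generating set for A (i.e., ∩_i ker g_i = 0). Then the co-generating set is minimal (no proper subset co-generates A) if and only if the restrictions g_i|_{soc A}, viewed in Hom_k(soc A, k), form a k-basis of Hom_k(soc A, k). -/
open IsLocalRing

/-- Let `(R,m,k)` be Noetherian local, `E = E_R(k)` with embedding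
`ι : k → E`, `A` an Artinian module and `g_1, …, g_t : A → E` a co-generating set for
`A` (`⋂ ker g_i = 0`).  Then the co-generating set is minimal (no proper subset
co-generates) iff the restrictions `g_i|_{soc A}`, viewed in `Hom_k(soc A, k)`, form a
`k`-basis: they span (every `h : soc A → k` satisfies
`ι ∘ h = ∑ c_i • (g_i|_{soc A})` for some `c_i`) and they are `k`-linearly independent
(`∑ c_i • (g_i|_{soc A}) = 0` forces all `c_i ∈ m`, i.e. all residues `c̄_i = 0`). -/
theorem minimal_cogenerating_iff_basis
    {R : Type*} [CommRing R] [IsNoetherianRing R] [IsLocalRing R]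
    {E : Type*} [AddCommGroup E] [Module R E]
    (hinj : Module.Injective R E)
    (ι : ResidueField R →ₗ[R] E) (hι : Function.Injective ι)
    (hess : ∀ N : Submodule R E, N ≠ ⊥ → LinearMap.range ι ⊓ N ≠ ⊥)
    {A : Type*} [AddCommGroup A] [Module R A] [IsArtinian R A]
    {t : ℕ} (g : Fin t → (A →ₗ[R] E))
    (hcog : (⨅ i, LinearMap.ker (g i)) = ⊥) :
    (∀ j : Fin t, (⨅ i ∈ ({j}ᶜ : Set (Fin t)), LinearMap.ker (g i)) ≠ ⊥) ↔
      ((∀ h : ↥(socle R A) →ₗ[R] ResidueField R, ∃ c : Fin t → R,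
          ι.comp h = ∑ i, c i • ((g i).comp (socle R A).subtype)) ∧
        (∀ c : Fin t → R,
          (∑ i, c i • ((g i).comp (socle R A).subtype)) = 0 →
            ∀ i, c i ∈ maximalIdeal R)) := by
  classical
  -- every nonzero submodule of A contains a nonzero socle element
  have hmin : ∀ P : Submodule R A, P ≠ ⊥ → ∃ y : A, y ∈ P ∧ y ∈ socle R A ∧ y ≠ 0 := by
    intro P hP
    obtain ⟨x, hxP, hx0⟩ := Submodule.exists_mem_ne_zero_of_ne_bot hP
    have hsp : Submodule.span R {x} ≠ ⊥ := by
      simpa [Submodule.span_singleton_eq_bot] using hx0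
    obtain ⟨N, ⟨hNle, hN0⟩, hNmin⟩ := IsArtinian.set_has_minimal
      {N : Submodule R A | N ≤ Submodule.span R {x} ∧ N ≠ ⊥}
      ⟨Submodule.span R {x}, le_rfl, hsp⟩
    have hfg : N.FG := by
      haveI : IsNoetherian R (Submodule.span R {x}) :=
        isNoetherian_of_fg_of_noetherian _ (Submodule.fg_span_singleton x)
      have h1 : (Submodule.comap (Submodule.span R {x}).subtype N).FG :=
        IsNoetherian.noetherian _
      have h2 := h1.map (Submodule.span R {x}).subtype
      rwa [Submodule.map_comap_subtype, inf_eq_right.mpr hNle] at h2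
    have hmN : maximalIdeal R • N = ⊥ := by
      by_contra hmN
      have hlt := hNmin (maximalIdeal R • N)
        ⟨le_trans Submodule.smul_le_right hNle, hmN⟩
      have heq : maximalIdeal R • N = N :=
        le_antisymm Submodule.smul_le_right (by
          by_contra hne
          exact hlt (lt_of_le_of_ne Submodule.smul_le_right (by
            intro h; exact hne (le_of_eq h.symm))))
      exact hN0 (Submodule.eq_bot_of_le_smul_of_le_jacobson_bot (maximalIdeal R) N hfg
        heq.ge (IsLocalRing.jacobson_eq_maximalIdeal ⊥ bot_ne_top).ge)
    obtain ⟨y, hyN, hy0⟩ := Submodule.exists_mem_ne_zero_of_ne_bot hN0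
    refine ⟨y, ((Submodule.span_singleton_le_iff_mem x P).mpr hxP) (hNle hyN), ?_, hy0⟩
    intro r hr
    have : r • y ∈ maximalIdeal R • N := Submodule.smul_mem_smul hr hyN
    rwa [hmN, Submodule.mem_bot] at this
  -- socle elements of E lie in the range of ι
  have hsocE : ∀ v : E, (∀ r ∈ maximalIdeal R, r • v = 0) → v ∈ LinearMap.range ι := by
    intro v hv
    by_cases hv0 : v = 0
    · rw [hv0]; exact Submodule.zero_mem _
    have hN : Submodule.span R {v} ≠ ⊥ := by
      simpa [Submodule.span_singleton_eq_bot] using hv0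
    obtain ⟨w, hw1, hw0⟩ := Submodule.exists_mem_ne_zero_of_ne_bot (hess _ hN)
    obtain ⟨hwr, hws⟩ := hw1
    obtain ⟨r, rfl⟩ := Submodule.mem_span_singleton.mp hws
    have hru : IsUnit r := by
      by_contra hru
      exact hw0 (hv r (IsLocalRing.notMem_maximalIdeal.not_right.mpr hru))
    obtain ⟨u, rfl⟩ := hru
    have : v = ((u⁻¹ : Rˣ) : R) • ((u : R) • v) := by
      rw [smul_smul, Units.inv_mul, one_smul]
    rw [this]
    exact Submodule.smul_mem _ _ hwr
  -- the restrictions of the g i to the socle factor through ι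
  have hmem : ∀ (i : Fin t) (x : socle R A), g i (x : A) ∈ LinearMap.range ι := by
    intro i x
    refine hsocE _ fun r hr => ?_
    rw [← map_smul, x.2 r hr, map_zero]
  let e : ResidueField R ≃ₗ[R] LinearMap.range ι := LinearEquiv.ofInjective ι hι
  let gb : Fin t → (socle R A →ₗ[R] ResidueField R) := fun i =>
    e.symm.toLinearMap ∘ₗ
      LinearMap.codRestrict (LinearMap.range ι) ((g i) ∘ₗ (socle R A).subtype)
        (fun x => hmem i x)
  have hgb : ∀ (i : Fin t) (x : socle R A), ι (gb i x) = g i (x : A) := by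
    intro i x
    have h1 : e (gb i x) = ⟨g i (x : A), hmem i x⟩ := e.apply_symm_apply _
    have h2 : (e (gb i x) : E) = ι (gb i x) := by
      simp [e, LinearEquiv.ofInjective_apply]
    rw [← h2, h1]
  -- the socle is killed by the maximal ideal, so it is a module over the residue field
  have htor : Module.IsTorsionBySet R (socle R A) (maximalIdeal R : Set R) := by
    intro x a
    ext
    exact x.2 (a : R) a.2
  letI : Module (ResidueField R) (socle R A) := htor.module
  haveI : IsScalarTower R (ResidueField R) (socle R A) := htor.isScalarTower
  -- residue-field-linear versions of maps
  have hks : ∀ (r : R) (v : ResidueField R), residue R r • v = r • v := fun r v => by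
    rw [← IsLocalRing.ResidueField.algebraMap_eq, algebraMap_smul]
  have hksS : ∀ (r : R) (x : socle R A), residue R r • x = r • x := fun r x => by
    rw [← IsLocalRing.ResidueField.algebraMap_eq, algebraMap_smul]
  let toK : (socle R A →ₗ[R] ResidueField R) → (socle R A →ₗ[ResidueField R] ResidueField R) :=
    fun f =>
    { toFun := f
      map_add' := f.map_add
      map_smul' := by
        intro c x
        obtain ⟨r, rfl⟩ := IsLocalRing.residue_surjective c
        show f (residue R r • x) = residue R r • f x
        rw [hksS, f.map_smul, hks] }
  -- the key pointwise computation
  have hsum : ∀ (c : Fin t → R) (x : socle R A),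
      (∑ i, c i • ((g i) ∘ₗ (socle R A).subtype)) x
        = ι ((∑ i, (residue R (c i)) • toK (gb i)) x) := by
    intro c x
    rw [LinearMap.sum_apply, LinearMap.sum_apply, map_sum]
    refine Finset.sum_congr rfl fun i _ => ?_
    rw [LinearMap.smul_apply, LinearMap.smul_apply]
    have h2 : (toK (gb i)) x = gb i x := rfl
    rw [hks, h2, map_smul, hgb]
    rfl
  constructor
  · -- minimal → basis
    intro hminimal
    constructor
    · -- spanning
      intro h
      have hker : (⨅ i, LinearMap.ker (toK (gb i))) ≤ LinearMap.ker (toK h) := by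
        intro x hx
        have hx0 : x = 0 := by
          have hxA : (x : A) ∈ ⨅ i, LinearMap.ker (g i) := by
            rw [Submodule.mem_iInf]
            intro i
            have hxi : gb i x = 0 := (Submodule.mem_iInf _).mp hx i
            rw [LinearMap.mem_ker, ← hgb i x, hxi, map_zero]
          rw [hcog, Submodule.mem_bot] at hxA
          exact Subtype.ext hxA
        rw [hx0]
        exact Submodule.zero_mem _
      obtain ⟨cb, hcb⟩ :=
        (Submodule.mem_span_range_iff_exists_fun _).mp (mem_span_of_iInf_ker_le_ker hker)
      choose c hc using fun i => IsLocalRing.residue_surjective (R := R) (cb i)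
      refine ⟨c, ?_⟩
      ext x
      have h2 : (∑ i, residue R (c i) • toK (gb i)) = toK h := by
        rw [← hcb]
        exact Finset.sum_congr rfl fun i _ => by rw [hc]
      rw [LinearMap.comp_apply, hsum c x, h2]
      rfl
    · -- independence
      intro c hc i
      by_contra hci
      have hcu : IsUnit (c i) := IsLocalRing.notMem_maximalIdeal.mp hci
      obtain ⟨y, hyK, hyS, hy0⟩ := hmin _ (hminimal i)
      have hyk : ∀ i' : Fin t, i' ≠ i → g i' y = 0 := by
        intro i' hne
        have h1 := (Submodule.mem_iInf _).mp hyK i'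
        have h2 := (Submodule.mem_iInf _).mp h1 hne
        exact h2
      have heval := congrArg (fun f : ↥(socle R A) →ₗ[R] E => f (⟨y, hyS⟩ : socle R A)) hc
      simp only [LinearMap.sum_apply, LinearMap.smul_apply, LinearMap.comp_apply,
        Submodule.coe_subtype, LinearMap.zero_apply] at heval
      have hsum0 : ∑ i', c i' • g i' y = c i • g i y :=
        Finset.sum_eq_single_of_mem i (Finset.mem_univ i)
          (fun b _ hb => by rw [hyk b hb, smul_zero])
      rw [hsum0] at heval
      have hgiy : g i y = 0 := by
        obtain ⟨u, hu⟩ := hcu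
        calc g i y = ((u⁻¹ : Rˣ) : R) • (c i • g i y) := by
              rw [← hu, smul_smul, Units.inv_mul, one_smul]
          _ = 0 := by rw [heval, smul_zero]
      have hybot : y ∈ ⨅ i', LinearMap.ker (g i') := by
        rw [Submodule.mem_iInf]
        intro i'
        by_cases hii : i' = i
        · rw [hii, LinearMap.mem_ker]; exact hgiy
        · rw [LinearMap.mem_ker]; exact hyk i' hii
      rw [hcog, Submodule.mem_bot] at hybot
      exact hy0 hybot
  · -- basis → minimal
    rintro ⟨hspan, hindep⟩ j hbot
    let L : Fin t → (socle R A →ₗ[ResidueField R] ResidueField R) :=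
      fun i => if i = j then 0 else toK (gb i)
    have hker : (⨅ i, LinearMap.ker (L i)) ≤ LinearMap.ker (toK (gb j)) := by
      intro x hx
      have hx0 : x = 0 := by
        have hxA : (x : A) ∈ ⨅ i ∈ ({j}ᶜ : Set (Fin t)), LinearMap.ker (g i) := by
          rw [Submodule.mem_iInf]
          intro i
          rw [Submodule.mem_iInf]
          intro hi
          have hij : i ≠ j := hi
          have hL := (Submodule.mem_iInf _).mp hx i
          rw [LinearMap.mem_ker] at hL ⊢
          have hLe : L i x = gb i x := by
            simp only [L, if_neg hij]; rfl
          rw [← hgb i x, ← hLe, hL, map_zero]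
        rw [hbot, Submodule.mem_bot] at hxA
        exact Subtype.ext hxA
      rw [hx0]
      exact Submodule.zero_mem _
    obtain ⟨cb, hcb⟩ :=
      (Submodule.mem_span_range_iff_exists_fun _).mp (mem_span_of_iInf_ker_le_ker hker)
    choose c0 hc0 using fun i => IsLocalRing.residue_surjective (R := R) (cb i)
    let d : Fin t → R := fun i => if i = j then -1 else c0 i
    have hd : (∑ i, d i • ((g i) ∘ₗ (socle R A).subtype)) = 0 := by
      ext x
      rw [hsum d x]
      have hzero : (∑ i, residue R (d i) • toK (gb i)) = 0 := by
        have hterm : ∀ i, residue R (d i) • toK (gb i)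
            = cb i • L i - (if i = j then toK (gb j) else 0) := by
          intro i
          by_cases hij : i = j
          · subst hij
            simp [d, L]
            exact neg_one_smul (ResidueField R) (toK (gb i))
          · simp only [d, L, if_neg hij, hc0, sub_zero]
        rw [Finset.sum_congr rfl (fun i _ => hterm i), Finset.sum_sub_distrib, hcb,
          Finset.sum_ite_eq' Finset.univ j]
        simp
      rw [hzero]
      simp
    have hdj := hindep d hd j
    simp only [d, if_pos rfl] at hdj
    exact IsLocalRing.notMem_maximalIdeal.mpr isUnit_one.neg hdj
end

section
/- Let R be a complete Noetherian local ring and B an R-module such that B and all of its quotients are Matlis-dualizable. Let {C_i}_{i∈I} be a family of submodules of B. Then, identifying (B/C)^∨ with {f ∈ B^∨ : C ⊆ ker f} ⊆ B^∨ for each submodule C, we have (B/∑_i C_i)^∨ = ∩_i (B/C_i)^∨ and (B/∩_i C_i)^∨ = ∑_i (B/C_i)^∨ as submodules of B^∨. -/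
open IsLocalRing

universe w

section Aux

variable {R : Type*} [CommRing R]

/-- A module is small if a submodule and the corresponding quotient are small. -/
lemma my_small_ext {M : Type*} [AddCommGroup M] [Module R M] (N : Submodule R M)
    [Small.{w} N] [Small.{w} (M ⧸ N)] : Small.{w} M := by
  have hsurj := Submodule.mkQ_surjective N
  set s := Function.surjInv hsurj with hs
  have hsec : ∀ y, N.mkQ (s y) = y := fun y => Function.surjInv_eq hsurj y
  have hf : Function.Injective (fun x : M =>
      ((⟨x - s (N.mkQ x), by
          rw [← Submodule.Quotient.mk_eq_zero]
          show N.mkQ _ = 0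
          rw [map_sub, hsec, sub_self]⟩ : N), N.mkQ x)) := by
    intro x y h
    have h1 : N.mkQ x = N.mkQ y := congrArg Prod.snd h
    have h2 : x - s (N.mkQ x) = y - s (N.mkQ y) := congrArg (Subtype.val ∘ Prod.fst) h
    rw [h1] at h2
    exact by linear_combination (norm := abel) h2
  exact small_of_injective hf

variable [IsLocalRing R]

/-- A finitely generated module killed by the maximal ideal is small whenever the
residue field is small. -/
lemma my_small_fg {M : Type*} [AddCommGroup M] [Module R M] [Small.{w} (ResidueField R)]
    (N : Submodule R M) (hN : N.FG)
    (hkill : ∀ r ∈ maximalIdeal R, ∀ x ∈ N, r • x = (0 : M)) : Small.{w} N := by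
  refine Submodule.fg_induction
    (motive := fun N _ => (∀ r ∈ maximalIdeal R, ∀ x ∈ N, r • x = (0 : M)) → Small.{w} N)
    ?_ ?_ N hN hkill
  · intro x hkill
    let l : R →ₗ[R] M := LinearMap.toSpanSingleton R M x
    let l' : R →ₗ[R] Submodule.span R {x} :=
      l.codRestrict _ (fun r => Submodule.smul_mem _ r (Submodule.mem_span_singleton_self x))
    have hm : (maximalIdeal R : Submodule R R) ≤ LinearMap.ker l' := by
      intro r hr
      exact Subtype.ext (hkill r hr x (Submodule.mem_span_singleton_self x))
    let lq : (R ⧸ (maximalIdeal R : Submodule R R)) →ₗ[R] Submodule.span R {x} :=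
      Submodule.liftQ _ l' hm
    have hsurj : Function.Surjective lq := by
      rintro ⟨y, hy⟩
      obtain ⟨a, ha⟩ := Submodule.mem_span_singleton.mp hy
      exact ⟨Submodule.Quotient.mk a, Subtype.ext ha⟩
    have : Small.{w} (R ⧸ (maximalIdeal R : Submodule R R)) :=
      (inferInstance : Small.{w} (ResidueField R))
    exact small_of_surjective hsurj
  · intro N₁ N₂ _ _ h1 h2 hkill
    haveI := h1 (fun r hr x hx => hkill r hr x (Submodule.mem_sup_left hx))
    haveI := h2 (fun r hr x hx => hkill r hr x (Submodule.mem_sup_right hx))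
    have hsurj : Function.Surjective (fun p : N₁ × N₂ =>
        (⟨(p.1 : M) + p.2, Submodule.add_mem _ (Submodule.mem_sup_left p.1.2)
          (Submodule.mem_sup_right p.2.2)⟩ : (N₁ ⊔ N₂ : Submodule R M))) := by
      rintro ⟨y, hy⟩
      obtain ⟨a, ha, b, hb, rfl⟩ := Submodule.mem_sup.mp hy
      exact ⟨(⟨a, ha⟩, ⟨b, hb⟩), rfl⟩
    exact small_of_surjective hsurj

variable [IsNoetherianRing R]

lemma my_small_quot_pow [Small.{w} (ResidueField R)] (n : ℕ) :
    Small.{w} (R ⧸ ((maximalIdeal R ^ n : Ideal R) : Submodule R R)) := by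
  induction n with
  | zero =>
    have : Subsingleton (R ⧸ ((maximalIdeal R ^ 0 : Ideal R) : Submodule R R)) := by
      rw [pow_zero]
      exact Submodule.Quotient.subsingleton_iff.mpr (by simp [Ideal.one_eq_top])
    exact small_subsingleton _
  | succ n ih =>
    set S : Submodule R R := ((maximalIdeal R ^ (n + 1) : Ideal R) : Submodule R R)
    set T : Submodule R R := ((maximalIdeal R ^ n : Ideal R) : Submodule R R)
    have hST : S ≤ T := Ideal.pow_le_pow_right (Nat.le_succ n)
    set N : Submodule R (R ⧸ S) := T.map S.mkQ
    haveI : Small.{w} N := by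
      refine my_small_fg N (IsNoetherian.noetherian N) ?_
      rintro r hr x hx
      obtain ⟨y, hy, rfl⟩ := hx
      rw [← map_smul, Submodule.mkQ_apply, Submodule.Quotient.mk_eq_zero]
      have : r • y = r * y := rfl
      rw [this]
      show r * y ∈ (maximalIdeal R ^ (n + 1) : Ideal R)
      rw [pow_succ']
      exact Ideal.mul_mem_mul hr hy
    haveI : Small.{w} ((R ⧸ S) ⧸ N) :=
      small_map (Submodule.quotientQuotientEquivQuotient S T hST).toEquiv
    exact my_small_ext N

/-- A complete Noetherian local ring with small residue field is small. -/
lemma my_small_R [Small.{w} (ResidueField R)] [IsAdicComplete (maximalIdeal R) R] :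
    Small.{w} R := by
  haveI : ∀ n : ℕ, Small.{w} (R ⧸ ((maximalIdeal R ^ n : Ideal R) : Submodule R R)) :=
    my_small_quot_pow
  have hinj : Function.Injective (fun (x : R) (n : ℕ) =>
      Submodule.Quotient.mk (p := ((maximalIdeal R ^ n : Ideal R) : Submodule R R)) x) := by
    intro x y h
    have hxy : ∀ n : ℕ, x - y ∈ ((maximalIdeal R ^ n : Ideal R) : Submodule R R) := by
      intro n
      rw [← Submodule.Quotient.eq]
      exact congrFun h n
    have := IsHausdorff.haus (inferInstance : IsHausdorff (maximalIdeal R) R) (x - y)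
      (fun n => by rw [SModEq.zero]; simpa using hxy n)
    exact sub_eq_zero.mp this
  exact small_of_injective hinj

end Aux

section Cogen

variable {R : Type*} [CommRing R] [IsLocalRing R]
  {E : Type*} [AddCommGroup E] [Module R E]

/-- If `E` satisfies Baer's criterion and contains the residue field, then maps to `E`
separate points of every module. -/
lemma my_cogen (hBaer : Module.Baer R E)
    (ι : ResidueField R →ₗ[R] E) (hι : Function.Injective ι)
    {M : Type*} [AddCommGroup M] [Module R M] {x : M} (hx : x ≠ 0) :
    ∃ φ : M →ₗ[R] E, φ x ≠ 0 := by
  set l : R →ₗ[R] M := LinearMap.toSpanSingleton R M x with hl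
  have hJ : LinearMap.ker l ≤ (maximalIdeal R : Submodule R R) := by
    refine le_maximalIdeal (fun h => hx ?_)
    have : (1 : R) ∈ LinearMap.ker l := h ▸ Submodule.mem_top
    simpa [l] using this
  set g : R →ₗ[R] E := ι ∘ₗ (maximalIdeal R : Submodule R R).mkQ with hg
  have hJg : LinearMap.ker l ≤ LinearMap.ker g := by
    intro r hr
    have : (maximalIdeal R : Submodule R R).mkQ r = 0 :=
      (Submodule.Quotient.mk_eq_zero _).mpr (hJ hr)
    show g r = 0
    calc g r = ι ((maximalIdeal R : Submodule R R).mkQ r) := rfl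
    _ = ι 0 := congrArg ι this
    _ = 0 := map_zero ι
  set fbar : (R ⧸ LinearMap.ker l) →ₗ[R] M := (LinearMap.ker l).liftQ l le_rfl with hfbar
  have hfinj : Function.Injective fbar := by
    rw [← LinearMap.ker_eq_bot, hfbar, Submodule.ker_liftQ_eq_bot]
    exact le_rfl
  set gbar : (R ⧸ LinearMap.ker l) →ₗ[R] E := (LinearMap.ker l).liftQ g hJg with hgbar
  obtain ⟨h, hh⟩ := hBaer.extension_property fbar hfinj gbar
  refine ⟨h, ?_⟩
  have hx1 : fbar (Submodule.Quotient.mk 1) = x := by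
    rw [hfbar, Submodule.liftQ_apply, hl, LinearMap.toSpanSingleton_apply, one_smul]
  have : h x = gbar (Submodule.Quotient.mk 1) := by
    rw [← hx1, ← LinearMap.comp_apply, hh]
  rw [this]
  have : gbar (Submodule.Quotient.mk 1) = ι ((maximalIdeal R : Submodule R R).mkQ 1) := by
    rw [hgbar, Submodule.liftQ_apply]
    rfl
  rw [this]
  intro hz
  have h1 : (maximalIdeal R : Submodule R R).mkQ 1 = 0 := hι (hz.trans (map_zero ι).symm)
  rw [Submodule.mkQ_apply, Submodule.Quotient.mk_eq_zero] at h1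
  exact (maximalIdeal.isMaximal R).ne_top (Ideal.eq_top_of_isUnit_mem _ h1 isUnit_one)

/-- Membership in the annihilator-type kernel. -/
lemma my_mem_ann {B : Type*} [AddCommGroup B] [Module R B] {C : Submodule R B}
    {f : B →ₗ[R] E} :
    f ∈ LinearMap.ker (LinearMap.lcomp R E C.subtype) ↔ C ≤ LinearMap.ker f := by
  rw [LinearMap.mem_ker]
  constructor
  · intro h x hx
    have := LinearMap.congr_fun h (⟨x, hx⟩ : C)
    simpa using this
  · intro h
    ext ⟨x, hx⟩
    simpa using h hx

end Cogen

/-- Let `R` be a complete Noetherian local ring, `E = E_R(k)`, and `B` a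
module all of whose quotients are Matlis-dualizable.  For a family `{C_i}` of
submodules of `B`, identifying `(B/C)^∨` with `{f ∈ B^∨ : C ⊆ ker f}`, we have
`(B/∑ C_i)^∨ = ⋂ (B/C_i)^∨` and `(B/⋂ C_i)^∨ = ∑ (B/C_i)^∨` inside `B^∨`. -/
theorem dual_of_sup_and_inf
    {R : Type*} [CommRing R] [IsNoetherianRing R] [IsLocalRing R]
    [IsAdicComplete (maximalIdeal R) R]
    {E : Type*} [AddCommGroup E] [Module R E]
    (hinj : Module.Injective R E)
    (ι : ResidueField R →ₗ[R] E) (hι : Function.Injective ι)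
    (hess : ∀ N : Submodule R E, N ≠ ⊥ → LinearMap.range ι ⊓ N ≠ ⊥)
    {B : Type*} [AddCommGroup B] [Module R B]
    -- `B` and all of its quotient modules are Matlis dualizable:
    (hB : Function.Bijective
      ((LinearMap.id : (B →ₗ[R] E) →ₗ[R] (B →ₗ[R] E)).flip))
    (hquot : ∀ C : Submodule R B, Function.Bijective
      ((LinearMap.id : ((B ⧸ C) →ₗ[R] E) →ₗ[R] ((B ⧸ C) →ₗ[R] E)).flip))
    {I : Type*} (C : I → Submodule R B) :
    LinearMap.ker (LinearMap.lcomp R E (⨆ i, C i).subtype)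
        = ⨅ i, LinearMap.ker (LinearMap.lcomp R E (C i).subtype) ∧
    LinearMap.ker (LinearMap.lcomp R E (⨅ i, C i).subtype)
        = ⨆ i, LinearMap.ker (LinearMap.lcomp R E (C i).subtype) := by
  -- `R` is small relative to the universe of `E`, hence `E` satisfies Baer's criterion.
  haveI : Small (ResidueField R) := small_of_injective hι
  haveI : Small R := my_small_R
  have hBaer : Module.Baer R E := Module.Baer.of_injective hinj
  constructor
  · -- first equality: purely formal
    ext f
    rw [Submodule.mem_iInf]
    constructor
    · intro h i
      exact my_mem_ann.mpr ((le_iSup C i).trans (my_mem_ann.mp h))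
    · intro h
      exact my_mem_ann.mpr (iSup_le fun i => my_mem_ann.mp (h i))
  · -- second equality
    refine le_antisymm ?_ (iSup_le fun i f hf =>
      my_mem_ann.mpr ((iInf_le C i).trans (my_mem_ann.mp hf)))
    intro f hf
    by_contra hfD
    set D : Submodule R (B →ₗ[R] E) :=
      ⨆ i, LinearMap.ker (LinearMap.lcomp R E (C i).subtype) with hD
    -- separate `f` from `D`
    have hmk : D.mkQ f ≠ 0 := by
      rw [Submodule.mkQ_apply, ne_eq, Submodule.Quotient.mk_eq_zero]
      exact hfD
    obtain ⟨φ, hφ⟩ := my_cogen hBaer ι hι hmk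
    set ψ : (B →ₗ[R] E) →ₗ[R] E := φ ∘ₗ D.mkQ with hψ
    -- `ψ` is evaluation at some `x : B` by surjectivity of the biduality map
    obtain ⟨x, hx⟩ := hB.2 ψ
    have hxeval : ∀ g : B →ₗ[R] E, g x = ψ g := fun g => by
      rw [← hx]; rfl
    -- `x` lies in every `C i`
    have hxC : x ∈ ⨅ i, C i := by
      rw [Submodule.mem_iInf]
      intro i
      by_contra hxCi
      have hmkx : (C i).mkQ x ≠ 0 := by
        rw [Submodule.mkQ_apply, ne_eq, Submodule.Quotient.mk_eq_zero]
        exact hxCi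
      obtain ⟨φi, hφi⟩ := my_cogen hBaer ι hι hmkx
      set g : B →ₗ[R] E := φi ∘ₗ (C i).mkQ with hgdef
      have hgmem : g ∈ D := by
        rw [hD]
        refine le_iSup (fun i => LinearMap.ker (LinearMap.lcomp R E (C i).subtype)) i ?_
        refine my_mem_ann.mpr (fun y hy => ?_)
        rw [LinearMap.mem_ker, hgdef, LinearMap.comp_apply, Submodule.mkQ_apply]
        rw [(Submodule.Quotient.mk_eq_zero _).mpr hy, map_zero]
      have : ψ g = 0 := by
        rw [hψ, LinearMap.comp_apply, Submodule.mkQ_apply,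
          (Submodule.Quotient.mk_eq_zero _).mpr hgmem, map_zero]
      rw [← hxeval g] at this
      exact hφi (by rwa [hgdef, LinearMap.comp_apply, Submodule.mkQ_apply] at this)
    -- contradiction with `f` vanishing on `⨅ i, C i`
    have h0 : f x = 0 := my_mem_ann.mp hf hxC
    have : ψ f ≠ 0 := hφ
    rw [← hxeval f] at this
    exact this h0
end

section
/- Let cl be a functorial residual closure operation on R-modules, and L ⊆ M modules on which the relevant closures are defined. Then the finitistic closure satisfies L^{cl_f}_M = ∪ {(L ∩ U)^{cl}_U : U a finitely generated submodule of M}, where L^{cl_f}_M = ∪ {L^{cl}_N : L ⊆ N ⊆ M, N/L finitely generated}. -/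
open scoped Classical

/-- For a functorial residual closure operation `cl`, the finitistic
version satisfies
`L^{cl_f}_M = ⋃ {(L ∩ U)^{cl}_U : U a finitely generated submodule of M}`,
where `L^{cl_f}_M = ⋃ {L^{cl}_N : L ⊆ N ⊆ M, N/L finitely generated}`. -/
theorem finitistic_closure_eq_union_over_fg_submodules
    {R : Type} [CommRing R]
    (cl : ∀ (X : Type) [AddCommGroup X] [Module R X], Submodule R X → Submodule R X)
    -- `cl` is a closure operation:
    (hext : ∀ (X : Type) [AddCommGroup X] [Module R X] (L : Submodule R X), L ≤ cl X L)
    (hmono : ∀ (X : Type) [AddCommGroup X] [Module R X] (L L' : Submodule R X),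
      L ≤ L' → cl X L ≤ cl X L')
    (hidem : ∀ (X : Type) [AddCommGroup X] [Module R X] (L : Submodule R X),
      cl X (cl X L) = cl X L)
    -- `cl` is functorial:
    (hfun : ∀ (X : Type) [AddCommGroup X] [Module R X] (Y : Type) [AddCommGroup Y]
      [Module R Y] (g : X →ₗ[R] Y) (L : Submodule R X),
        Submodule.map g (cl X L) ≤ cl Y (Submodule.map g L))
    -- `cl` is residual:
    (hres : ∀ (X : Type) [AddCommGroup X] [Module R X] (Y : Type) [AddCommGroup Y]
      [Module R Y] (q : X →ₗ[R] Y), Function.Surjective q →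
        cl X (LinearMap.ker q) = Submodule.comap q (cl Y ⊥))
    {M : Type} [AddCommGroup M] [Module R M] (L : Submodule R M) :
    ∀ z : M,
      (∃ N : Submodule R M, ∃ hLN : L ≤ N, ∃ hz : z ∈ N,
        Module.Finite R (↥N ⧸ Submodule.comap N.subtype L) ∧
        (⟨z, hz⟩ : ↥N) ∈ cl ↥N (Submodule.comap N.subtype L)) ↔
      (∃ U : Submodule R M, ∃ hz : z ∈ U, U.FG ∧
        (⟨z, hz⟩ : ↥U) ∈ cl ↥U (Submodule.comap U.subtype (L ⊓ U))) := by
  intro z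
  constructor
  · rintro ⟨N, hLN, hzN, hfin, hzcl⟩
    set LN : Submodule R ↥N := Submodule.comap N.subtype L with hLNdef
    -- obtain finite generators of N ⧸ LN
    obtain ⟨s, hs⟩ := hfin.fg_top
    -- lift them to N via a section of mkQ
    have hsurj : Function.Surjective LN.mkQ := Submodule.mkQ_surjective LN
    set f : (↥N ⧸ LN) → ↥N := Function.surjInv hsurj with hf
    set t : Finset ↥N := s.image f with ht
    set U : Submodule R M :=
      (Submodule.span R (↑t : Set ↥N)).map N.subtype ⊔ Submodule.span R {z} with hU
    have hUfg : U.FG := by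
      apply Submodule.FG.sup
      · exact (Submodule.fg_span t.finite_toSet).map _
      · exact Submodule.fg_span (Set.finite_singleton z)
    have hUN : U ≤ N := by
      apply sup_le
      · intro x hx
        obtain ⟨y, _, rfl⟩ := hx
        exact y.2
      · rw [Submodule.span_singleton_le_iff_mem]; exact hzN
    have hzU : z ∈ U := le_sup_right (b := Submodule.span R {z}) (Submodule.mem_span_singleton_self z)
    -- N ≤ U ⊔ L
    have hNUL : ∀ n : ↥N, ∃ w : ↥N, (w : M) ∈ U ∧ (n : M) - (w : M) ∈ L := by
      intro n
      have h1 : LN.mkQ n ∈ Submodule.span R (↑s : Set (↥N ⧸ LN)) := by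
        rw [hs]; trivial
      have h2 : (↑s : Set (↥N ⧸ LN)) ⊆ LN.mkQ '' (↑t : Set ↥N) := by
        intro x hx
        exact ⟨f x, Finset.mem_image_of_mem f hx, Function.surjInv_eq hsurj x⟩
      have h3 : LN.mkQ n ∈ Submodule.map LN.mkQ (Submodule.span R (↑t : Set ↥N)) := by
        rw [Submodule.map_span]
        exact Submodule.span_mono h2 h1
      obtain ⟨w, hw, hwn⟩ := h3
      refine ⟨w, le_sup_left (a := (Submodule.span R (↑t : Set ↥N)).map N.subtype) ⟨w, hw, rfl⟩, ?_⟩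
      have hsub : n - w ∈ LN := by
        have h0 : LN.mkQ (n - w) = 0 := by rw [map_sub, hwn, sub_self]
        rwa [Submodule.mkQ_apply, Submodule.Quotient.mk_eq_zero] at h0
      exact hsub
    -- the restricted quotient map q : U → N ⧸ LN
    set q : ↥U →ₗ[R] (↥N ⧸ LN) := LN.mkQ ∘ₗ Submodule.inclusion hUN with hq
    have hqsurj : Function.Surjective q := by
      intro y
      obtain ⟨n, rfl⟩ := hsurj y
      obtain ⟨w, hwU, hnw⟩ := hNUL n
      refine ⟨⟨(w : M), hwU⟩, ?_⟩
      show LN.mkQ (Submodule.inclusion hUN ⟨(w : M), hwU⟩) = LN.mkQ n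
      have : Submodule.inclusion hUN ⟨(w : M), hwU⟩ = w := rfl
      rw [this, Submodule.mkQ_apply, Submodule.mkQ_apply, Submodule.Quotient.eq]
      simpa [LN] using neg_mem hnw
    have hker : LinearMap.ker q = Submodule.comap U.subtype (L ⊓ U) := by
      ext ⟨u, hu⟩
      simp only [LinearMap.mem_ker, Submodule.mem_comap, Submodule.mem_inf]
      constructor
      · intro h
        have : Submodule.inclusion hUN ⟨u, hu⟩ ∈ LN := by
          rwa [← Submodule.Quotient.mk_eq_zero, ← Submodule.mkQ_apply]
        exact ⟨this, hu⟩
      · intro ⟨h, _⟩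
        show LN.mkQ (Submodule.inclusion hUN ⟨u, hu⟩) = 0
        rw [Submodule.mkQ_apply, Submodule.Quotient.mk_eq_zero]
        exact h
    refine ⟨U, hzU, hUfg, ?_⟩
    rw [← hker, hres ↥U (↥N ⧸ LN) q hqsurj, Submodule.mem_comap]
    have hz' : (⟨z, hzN⟩ : ↥N) ∈ Submodule.comap LN.mkQ (cl (↥N ⧸ LN) ⊥) := by
      rw [← hres ↥N (↥N ⧸ LN) LN.mkQ hsurj, Submodule.ker_mkQ]
      exact hzcl
    have : q ⟨z, hzU⟩ = LN.mkQ ⟨z, hzN⟩ := rfl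
    rw [this]
    exact hz'
  · rintro ⟨U, hzU, hUfg, hzcl⟩
    set N : Submodule R M := L ⊔ U with hN
    have hLN : L ≤ N := le_sup_left
    have hUN : U ≤ N := le_sup_right
    have hzN : z ∈ N := hUN hzU
    set LN : Submodule R ↥N := Submodule.comap N.subtype L with hLNdef
    set g : ↥U →ₗ[R] ↥N := Submodule.inclusion hUN with hg
    -- finiteness of N ⧸ LN via surjection from U
    have hUfin : Module.Finite R ↥U := Module.Finite.iff_fg.mpr hUfg
    have hsurj : Function.Surjective (LN.mkQ ∘ₗ g) := by
      intro y
      obtain ⟨n, rfl⟩ := Submodule.mkQ_surjective LN y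
      have hn : (n : M) ∈ L ⊔ U := n.2
      rw [Submodule.mem_sup] at hn
      obtain ⟨l, hl, u, hu, hlu⟩ := hn
      refine ⟨⟨u, hu⟩, ?_⟩
      show LN.mkQ (g ⟨u, hu⟩) = LN.mkQ n
      rw [Submodule.mkQ_apply, Submodule.mkQ_apply, Submodule.Quotient.eq]
      have : ((g ⟨u, hu⟩ : ↥N) : M) - (n : M) = -l := by
        simp only [hg]
        show u - (n : M) = -l
        rw [← hlu]; abel
      show ((g ⟨u, hu⟩ - n : ↥N) : M) ∈ L
      rw [Submodule.coe_sub, this]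
      exact neg_mem hl
    have hfin : Module.Finite R (↥N ⧸ LN) := Module.Finite.of_surjective _ hsurj
    refine ⟨N, hLN, hzN, hfin, ?_⟩
    have h1 : (⟨z, hzN⟩ : ↥N) ∈ Submodule.map g (cl ↥U (Submodule.comap U.subtype (L ⊓ U))) :=
      ⟨⟨z, hzU⟩, hzcl, rfl⟩
    have h2 := hfun ↥U ↥N g (Submodule.comap U.subtype (L ⊓ U)) h1
    refine hmono ↥N _ _ ?_ h2
    rintro x ⟨⟨u, hu⟩, hmem, rfl⟩
    exact hmem.1
end
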